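/- arXiv:0706.0151 — 3 statements merged into one kernel-verified Lean document; each statement's English description precedes it below -/
import Mathlib

section
/- Let q > 1 and let z ∈ ℂ with Re(z) ≥ 0. Then the function ψ_{q,z} : (0,∞) → ℂ defined by ψ_{q,z}(x) = ( x^{1−q} + z )^{1/(1−q)} (principal branch) is Lipschitz with constant 1: for all x₀, x₁ > 0, | ψ_{q,z}(x₁) − ψ_{q,z}(x₀) | ≤ | x₁ − x₀ |. -/
open MeasureTheory ProbabilityTheory Filter Matrix
open scoped Topology

noncomputable section

/-- A random vector `X` on `(Ω, P)` has Lebesgue density `f`. -/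
def HasDensity {Ω E : Type*} [MeasurableSpace Ω] [MeasureSpace E]
    (X : Ω → E) (P : Measure Ω) (f : E → ℝ) : Prop :=
  Measure.map X P = volume.withDensity (fun x => ENNReal.ofReal (f x))

/-- Density of the chi distribution with `m` degrees of freedom and scale parameter `σ`:
`f(a) = 2^(1-m/2) σ^(-m) Γ(m/2)⁻¹ a^(m-1) exp(-a²/(2σ²))` on `(0,∞)`. -/
def chiDensity (m σ : ℝ) (x : ℝ) : ℝ :=
  if 0 < x then
    2 ^ (1 - m / 2) * σ ^ (-m) * (Real.Gamma (m / 2))⁻¹ * x ^ (m - 1) *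
      Real.exp (-x ^ 2 / (2 * σ ^ 2))
  else 0

/-- The q-Gaussian density for `q > 1` with parameter matrix `L` (`Λ` in the paper):
`f(x) = Γ(1/(q-1)) / (Γ(1/(q-1) - d/2) √(det(πΛ))) (1 + xᵀΛ⁻¹x)^(1/(1-q))`. -/
def qGaussGT (d : ℕ) (q : ℝ) (L : Matrix (Fin d) (Fin d) ℝ) (x : Fin d → ℝ) : ℝ :=
  Real.Gamma (1 / (q - 1)) /
      (Real.Gamma (1 / (q - 1) - (d : ℝ) / 2) * Real.sqrt (Real.pi • L).det) *
    (1 + x ⬝ᵥ (L⁻¹ *ᵥ x)) ^ (1 / (1 - q))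

/-- The q-Gaussian density for `q < 1` with parameter matrix `S` (`Σ` in the paper):
`f(x) = Γ((2-q)/(1-q) + d/2) / (Γ((2-q)/(1-q)) √(det(πΣ))) (1 - xᵀΣ⁻¹x)₊^(1/(1-q))`. -/
def qGaussLT (d : ℕ) (q : ℝ) (S : Matrix (Fin d) (Fin d) ℝ) (x : Fin d → ℝ) : ℝ :=
  Real.Gamma ((2 - q) / (1 - q) + (d : ℝ) / 2) /
      (Real.Gamma ((2 - q) / (1 - q)) * Real.sqrt (Real.pi • S).det) *
    (max (1 - x ⬝ᵥ (S⁻¹ *ᵥ x)) 0) ^ (1 / (1 - q))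

/-- The q-Fourier transform of a (nonnegative) probability density `f` on `ℝ^d`,
with the integrand `f(x) (1 + (1-q) i xᵀξ f(x)^(q-1))^(1/(1-q))` (principal branch),
which vanishes where `f` does. -/
def qFourier (d : ℕ) (q : ℝ) (f : (Fin d → ℝ) → ℝ) (ξ : Fin d → ℝ) : ℂ :=
  ∫ x, (f x : ℂ) *
    (1 + (1 - (q : ℂ)) * Complex.I * ((x ⬝ᵥ ξ : ℝ) : ℂ) * ((f x ^ (q - 1) : ℝ) : ℂ)) ^
      ((1 : ℂ) / (1 - (q : ℂ)))

/-- The q-product of two complex numbers (principal branch):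
`x ⊗_q y = (x^(1-q) + y^(1-q) - 1)^(1/(1-q))`. -/
def qProd (q : ℝ) (x y : ℂ) : ℂ :=
  (x ^ (1 - (q : ℂ)) + y ^ (1 - (q : ℂ)) - 1) ^ ((1 : ℂ) / (1 - (q : ℂ)))

/-- Total variation divergence between two densities on `ℝ^d`. -/
def dTV (d : ℕ) (f g : (Fin d → ℝ) → ℝ) : ℝ :=
  (1 / 2) * ∫ x, |f x - g x|

/-- Centered Gaussian density with covariance matrix `K` on `ℝ^d`. -/
def gaussDensity (d : ℕ) (K : Matrix (Fin d) (Fin d) ℝ) (x : Fin d → ℝ) : ℝ :=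
  (Real.sqrt ((2 * Real.pi) • K).det)⁻¹ * Real.exp (-(x ⬝ᵥ (K⁻¹ *ᵥ x)) / 2)

/-- **Lemma 2.** For `q > 1` and `z ∈ ℂ` with `Re(z) ≥ 0`, the function
`ψ_{q,z}(x) = (x^(1-q) + z)^(1/(1-q))` on `(0,∞)` is Lipschitz with constant 1. -/
theorem psi_lipschitz_one (q : ℝ) (hq : 1 < q) (z : ℂ) (hz : 0 ≤ z.re)
    (x₀ x₁ : ℝ) (h₀ : 0 < x₀) (h₁ : 0 < x₁) :
    ‖(((x₁ : ℂ) ^ (1 - (q : ℂ)) + z) ^ ((1 : ℂ) / (1 - (q : ℂ))) -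
          ((x₀ : ℂ) ^ (1 - (q : ℂ)) + z) ^ ((1 : ℂ) / (1 - (q : ℂ))))‖ ≤
      |x₁ - x₀| := by
  have hcne : (1 : ℝ) - q < 0 := by linarith
  have hne : (1 : ℝ) - q ≠ 0 := hcne.ne
  set c : ℂ := (1 : ℂ) / (1 - (q : ℂ)) with hc
  set F : ℝ → ℂ := fun x => ((x : ℂ) ^ (1 - (q : ℂ)) + z) ^ c with hF
  set D : ℝ → ℂ := fun x =>
    c * (((x : ℂ) ^ (1 - (q : ℂ)) + z) ^ (c - 1)) *
      ((1 - (q : ℂ)) * (x : ℂ) ^ ((1 - (q : ℂ)) - 1)) with hD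
  have hcast : ∀ x : ℝ, 0 < x → (x : ℂ) ^ (1 - (q : ℂ)) = ((x ^ (1 - q) : ℝ) : ℂ) := by
    intro x hx
    rw [Complex.ofReal_cpow hx.le]
    push_cast
    ring_nf
  have hre : ∀ x : ℝ, 0 < x → 0 < ((x : ℂ) ^ (1 - (q : ℂ)) + z).re := by
    intro x hx
    have h1 : (0:ℝ) < x ^ (1 - q) := Real.rpow_pos_of_pos hx _
    rw [hcast x hx]
    simp only [Complex.add_re, Complex.ofReal_re]
    linarith
  have hderiv : ∀ x ∈ Set.Ioi (0:ℝ), HasDerivWithinAt F (D x) (Set.Ioi 0) x := by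
    intro x hx
    have hx' : (0:ℝ) < x := hx
    have hslit : (x : ℂ) ∈ Complex.slitPlane := Or.inl (by simpa using hx')
    have h1 : HasDerivAt (fun w : ℂ => w ^ (1 - (q : ℂ)) + z)
        ((1 - (q : ℂ)) * (x : ℂ) ^ ((1 - (q : ℂ)) - 1)) (x : ℂ) := by
      exact (Complex.hasStrictDerivAt_cpow_const hslit).hasDerivAt.add_const z
    have h2 := h1.cpow_const (c := c) (Or.inl (hre x hx'))
    have h3 := h2.comp_ofReal
    exact h3.hasDerivWithinAt
  have hbound : ∀ x ∈ Set.Ioi (0:ℝ), ‖D x‖ ≤ 1 := by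
    intro x hx
    have hx' : (0:ℝ) < x := hx
    set w : ℂ := (x : ℂ) ^ (1 - (q : ℂ)) + z with hw
    have hwre : 0 < w.re := hre x hx'
    have hwne : w ≠ 0 := by
      intro h; rw [h] at hwre; simp at hwre
    have he : (c - 1) = ((1 / (1 - q) - 1 : ℝ) : ℂ) := by rw [hc]; push_cast; ring
    have habs : ‖w ^ (c - 1)‖ = ‖w‖ ^ (1 / (1 - q) - 1 : ℝ) := by
      rw [he, Complex.norm_cpow_of_ne_zero hwne, Complex.ofReal_re, Complex.ofReal_im, mul_zero,
        Real.exp_zero, div_one]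
    have hr : (1 / (1 - q) - 1 : ℝ) ≤ 0 := by
      have : 1 / (1 - q) < 0 := div_neg_of_pos_of_neg one_pos hcne
      linarith
    have hxpow : (0:ℝ) < x ^ (1 - q) := Real.rpow_pos_of_pos hx' _
    have hle : x ^ (1 - q) ≤ ‖w‖ := by
      calc x ^ (1 - q) ≤ w.re := by
            rw [hw, hcast x hx']
            simp only [Complex.add_re, Complex.ofReal_re]; linarith
        _ ≤ ‖w‖ := Complex.re_le_norm w
    have hpow : ‖w‖ ^ (1 / (1 - q) - 1 : ℝ) ≤ x ^ q := by
      calc ‖w‖ ^ (1 / (1 - q) - 1 : ℝ)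
          ≤ (x ^ (1 - q)) ^ (1 / (1 - q) - 1 : ℝ) :=
            Real.rpow_le_rpow_of_nonpos hxpow hle hr
        _ = x ^ q := by
            rw [← Real.rpow_mul hx'.le]
            congr 1
            field_simp
            ring
    have hx2 : (0:ℝ) < x ^ ((1 - q) - 1) := Real.rpow_pos_of_pos hx' _
    have hcabs : ‖c‖ = 1 / |1 - q| := by
      have h1c : c = ((1 / (1 - q) : ℝ) : ℂ) := by rw [hc]; push_cast; ring
      rw [h1c, Complex.norm_real, Real.norm_eq_abs, abs_div, abs_one]
    have hlast : ‖(1 - (q : ℂ)) * (x : ℂ) ^ ((1 - (q : ℂ)) - 1)‖ =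
        |1 - q| * x ^ ((1 - q) - 1 : ℝ) := by
      have h4 : (x : ℂ) ^ ((1 - (q : ℂ)) - 1) = ((x ^ ((1 - q) - 1) : ℝ) : ℂ) := by
        rw [Complex.ofReal_cpow hx'.le]
        push_cast
        ring_nf
      have h5 : (1 - (q : ℂ)) = ((1 - q : ℝ) : ℂ) := by push_cast; ring
      rw [norm_mul, h4, h5, Complex.norm_real, Real.norm_eq_abs, Complex.norm_real, Real.norm_eq_abs, abs_of_pos hx2]
    have hnorm : ‖D x‖ = (1 / |1 - q|) * (‖w‖ ^ (1 / (1 - q) - 1 : ℝ))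
        * (|1 - q| * x ^ ((1 - q) - 1 : ℝ)) := by
      simp only [hD, ← hw, norm_mul, habs, hcabs]
      rw [← hlast, norm_mul]
    rw [hnorm]
    have habs1 : (0:ℝ) < |1 - q| := abs_pos.mpr hne
    calc (1 / |1 - q|) * (‖w‖ ^ (1 / (1 - q) - 1 : ℝ)) * (|1 - q| * x ^ ((1 - q) - 1 : ℝ))
        ≤ (1 / |1 - q|) * (x ^ q) * (|1 - q| * x ^ ((1 - q) - 1 : ℝ)) := by
          gcongr
      _ = x ^ q * x ^ ((1 - q) - 1 : ℝ) := by field_simp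
      _ = 1 := by
          rw [← Real.rpow_add hx']
          norm_num
  have key := (convex_Ioi (0:ℝ)).norm_image_sub_le_of_norm_hasDerivWithin_le hderiv hbound
    (Set.mem_Ioi.mpr h₀) (Set.mem_Ioi.mpr h₁)
  rw [one_mul] at key
  calc ‖_‖ = ‖F x₁ - F x₀‖ := rfl
    _ ≤ ‖x₁ - x₀‖ := key
    _ = |x₁ - x₀| := Real.norm_eq_abs _
end
end

section
/- Let q > 1 and q₁ > 1. Let Z₁, Z₂, Z̃₁, Z̃₂ be random vectors in ℝ^d with probability densities, and assume that for every ξ ∈ ℝ^d the four values F_q[Z₁](ξ), F_q[Z₂](ξ), F_q[Z̃₁](ξ), F_q[Z̃₂](ξ) are real and positive, and moreover F_q[Z₂](ξ)^{1−q₁} ≥ 1, F_q[Z̃₁](ξ)^{1−q₁} ≥ 1 and F_q[Z̃₂](ξ)^{1−q₁} ≥ 1. Then sup_{ξ ∈ ℝ^d} | F_q[Z₁](ξ) ⊗_{q₁} F_q[Z₂](ξ) − F_q[Z̃₁](ξ) ⊗_{q₁} F_q[Z̃₂](ξ) | ≤ 2 d_TV(Z₁, Z̃₁) + 2 d_TV(Z₂,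 Z̃₂). -/
open MeasureTheory ProbabilityTheory Filter Matrix
open scoped Topology

noncomputable section

namespace QProdAux

open Complex

lemma ofReal_mul_cpow {r : ℝ} (hr : 0 < r) {z : ℂ} (hz : z ≠ 0) (c : ℂ) :
    ((r : ℂ) * z) ^ c = (r : ℂ) ^ c * z ^ c := by
  have hr' : (r : ℂ) ≠ 0 := ofReal_ne_zero.mpr hr.ne'
  rw [cpow_def_of_ne_zero (mul_ne_zero hr' hz), Complex.log_ofReal_mul hr hz,
    add_mul, Complex.exp_add]
  congr 1
  · rw [cpow_def_of_ne_zero hr', ← Complex.ofReal_log hr.le]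
  · rw [cpow_def_of_ne_zero hz]

/-- Core MVT lemma: `y ↦ (↑(y^σ) + w)^(1/σ)` is 1-Lipschitz on positives when `σ < 0` and
`0 ≤ w.re`. -/
lemma core {σ : ℝ} (hσ : σ < 0) {w : ℂ} (hw : 0 ≤ w.re) {u v : ℝ}
    (hu : 0 < u) (hv : 0 < v) :
    ‖((↑(u ^ σ) + w) ^ (((1/σ : ℝ)) : ℂ)) - ((↑(v ^ σ) + w) ^ (((1/σ : ℝ)) : ℂ))‖ ≤ |u - v| := by
  have hσ0 : σ ≠ 0 := hσ.ne
  set s : Set ℝ := Set.Icc (min u v) (max u v) with hs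
  have hmem : ∀ y ∈ s, 0 < y := fun y hy => lt_of_lt_of_le (lt_min hu hv) hy.1
  set F : ℝ → ℂ := fun y => ((↑(y ^ σ) + w) ^ (((1/σ : ℝ)) : ℂ)) with hF
  set F' : ℝ → ℂ := fun y =>
    (((1/σ : ℝ)) : ℂ) * (↑(y ^ σ) + w) ^ ((((1/σ : ℝ)) : ℂ) - 1) * ↑(σ * y ^ (σ - 1)) with hF'
  have hderiv : ∀ y ∈ s, HasDerivWithinAt F (F' y) s y := by
    intro y hy
    have hy0 : 0 < y := hmem y hy
    have h1 : HasDerivAt (fun y : ℝ => ((y ^ σ : ℝ) : ℂ) + w) (↑(σ * y ^ (σ - 1))) y :=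
      ((Real.hasDerivAt_rpow_const (Or.inl hy0.ne')).ofReal_comp).add_const w
    have hsl : ((y ^ σ : ℝ) : ℂ) + w ∈ Complex.slitPlane := by
      rw [Complex.mem_slitPlane_iff]
      left
      have := Real.rpow_pos_of_pos hy0 σ
      simp only [Complex.add_re, Complex.ofReal_re]
      linarith
    have hout := (Complex.hasStrictDerivAt_cpow_const (c := (((1/σ : ℝ)) : ℂ)) hsl).hasDerivAt
    have h2 := (hout.hasFDerivAt.restrictScalars ℝ).comp_hasDerivAt y h1
    have h3 : HasDerivAt F (F' y) y := by
      convert h2 using 1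
      case e'_9 =>
        simp only [hF', ContinuousLinearMap.coe_restrictScalars',
          ContinuousLinearMap.toSpanSingleton_apply, smul_eq_mul]
        ring
      all_goals rfl
    exact h3.hasDerivWithinAt
  have hbound : ∀ y ∈ s, ‖F' y‖ ≤ 1 := by
    intro y hy
    have hy0 : 0 < y := hmem y hy
    have hyσ : 0 < y ^ σ := Real.rpow_pos_of_pos hy0 σ
    have hz : ((y ^ σ : ℝ) : ℂ) + w ≠ 0 := by
      intro h
      have := congrArg Complex.re h
      simp only [Complex.add_re, Complex.ofReal_re, Complex.zero_re] at this
      linarith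
    have habs : (y ^ σ : ℝ) ≤ ‖((y ^ σ : ℝ) : ℂ) + w‖ := by
      refine le_trans ?_ (Complex.re_le_norm _)
      simp only [Complex.add_re, Complex.ofReal_re]
      linarith
    have hexp : (1/σ : ℝ) - 1 ≤ 0 := by
      have : 1/σ < 0 := div_neg_of_pos_of_neg one_pos hσ
      linarith
    have hcp : ‖(((y ^ σ : ℝ) : ℂ) + w) ^ ((((1/σ : ℝ)) : ℂ) - 1)‖ ≤ y ^ (1 - σ) := by
      have h1 : ((((1/σ : ℝ)) : ℂ) - 1) = (((1/σ - 1 : ℝ)) : ℂ) := by push_cast; ring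
      rw [h1, Complex.norm_cpow_of_ne_zero hz]
      simp only [Complex.ofReal_re, Complex.ofReal_im, mul_zero, Real.exp_zero, div_one]
      calc ‖((y ^ σ : ℝ) : ℂ) + w‖ ^ (1/σ - 1)
          ≤ (y ^ σ) ^ (1/σ - 1) := Real.rpow_le_rpow_of_nonpos hyσ habs hexp
        _ = y ^ (σ * (1/σ - 1)) := (Real.rpow_mul hy0.le _ _).symm
        _ = y ^ (1 - σ) := by rw [show σ * (1/σ - 1) = 1 - σ by field_simp]
    have hnorm : ‖F' y‖ = |1/σ| * ‖(((y ^ σ : ℝ) : ℂ) + w) ^ ((((1/σ : ℝ)) : ℂ) - 1)‖ *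
        (|σ| * y ^ (σ - 1)) := by
      simp only [hF', norm_mul, Complex.norm_real, Real.norm_eq_abs, abs_mul,
        abs_of_pos (Real.rpow_pos_of_pos hy0 (σ - 1))]
    rw [hnorm]
    have h3 : 0 ≤ |σ| * y ^ (σ - 1) := by positivity
    have h4 : (0:ℝ) ≤ |1/σ| := abs_nonneg _
    have h2 : |1/σ| * ‖(((y ^ σ : ℝ) : ℂ) + w) ^ ((((1/σ : ℝ)) : ℂ) - 1)‖ * (|σ| * y ^ (σ - 1))
        ≤ |1/σ| * (y ^ (1 - σ)) * (|σ| * y ^ (σ - 1)) :=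
      mul_le_mul_of_nonneg_right (mul_le_mul_of_nonneg_left hcp h4) h3
    refine le_trans h2 (le_of_eq ?_)
    have h5 : y ^ (1 - σ) * y ^ (σ - 1) = 1 := by
      rw [← Real.rpow_add hy0]; norm_num
    have h6 : |1/σ| * |σ| = 1 := by
      rw [abs_div]
      field_simp
      simp
    calc |1/σ| * y ^ (1 - σ) * (|σ| * y ^ (σ - 1))
        = (|1/σ| * |σ|) * (y ^ (1 - σ) * y ^ (σ - 1)) := by ring
      _ = 1 := by rw [h5, h6, mul_one]
  have hu' : u ∈ s := ⟨min_le_left _ _, le_max_left _ _⟩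
  have hv' : v ∈ s := ⟨min_le_right _ _, le_max_right _ _⟩
  have := (convex_Icc _ _).norm_image_sub_le_of_norm_hasDerivWithin_le hderiv hbound hv' hu'
  simpa only [one_mul, Real.norm_eq_abs] using this

lemma realLip {σ k : ℝ} (hσ : σ < 0) (hk : 0 ≤ k) {u v : ℝ} (hu : 0 < u) (hv : 0 < v) :
    |(u ^ σ + k) ^ (1/σ) - (v ^ σ + k) ^ (1/σ)| ≤ |u - v| := by
  have h := core hσ (w := (k : ℂ)) (by simp [hk]) hu hv
  have e : ∀ y : ℝ, 0 < y →
      ((↑(y ^ σ) + (k : ℂ))) ^ (((1/σ : ℝ)) : ℂ) = (((y ^ σ + k) ^ (1/σ) : ℝ) : ℂ) := by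
    intro y hy
    have hpos : (0:ℝ) ≤ y ^ σ + k := by positivity
    rw [← Complex.ofReal_add, Complex.ofReal_cpow hpos]
  rw [e u hu, e v hv, ← Complex.ofReal_sub, Complex.norm_real, Real.norm_eq_abs] at h
  exact h


/-- The `q`-Fourier integrand as a function of the density value. -/
def Eint (q t y : ℝ) : ℂ :=
  (y : ℂ) * (1 + (1 - (q : ℂ)) * Complex.I * (t : ℂ) * ((y ^ (q - 1) : ℝ) : ℂ)) ^
    ((1 : ℂ) / (1 - (q : ℂ)))

lemma exp_cast {q : ℝ} (hq : 1 < q) : ((1 : ℂ) / (1 - (q : ℂ))) = (((1 / (1 - q) : ℝ)) : ℂ) := by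
  push_cast
  ring

lemma Eint_eq (q t y : ℝ) (hq : 1 < q) :
    Eint q t y = (y : ℂ) *
      (1 + ((((1 - q) * t * (y ^ (q - 1)) : ℝ)) : ℂ) * Complex.I) ^ (((1 / (1 - q) : ℝ)) : ℂ) := by
  rw [Eint, exp_cast hq]
  congr 2
  push_cast
  ring

lemma base_ne_zero (m : ℝ) : (1 + ((m : ℝ) : ℂ) * Complex.I) ≠ 0 := by
  intro h
  have := congrArg Complex.re h
  simp at this

lemma norm_Eint_le {q : ℝ} (hq : 1 < q) (t y : ℝ) : ‖Eint q t y‖ ≤ |y| := by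
  rw [Eint_eq q t y hq, norm_mul]
  have h1 : ‖((y : ℝ) : ℂ)‖ = |y| := by simp
  have h2 : ‖(1 + ((((1 - q) * t * (y ^ (q - 1)) : ℝ)) : ℂ) * Complex.I) ^
      (((1 / (1 - q) : ℝ)) : ℂ)‖ ≤ 1 := by
    rw [Complex.norm_cpow_of_ne_zero (base_ne_zero _)]
    simp only [Complex.ofReal_re, Complex.ofReal_im, mul_zero, Real.exp_zero, div_one]
    apply Real.rpow_le_one_of_one_le_of_nonpos
    · calc (1 : ℝ) = (1 + ((((1 - q) * t * (y ^ (q - 1)) : ℝ)) : ℂ) * Complex.I).re := by simp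
        _ ≤ _ := Complex.re_le_norm _
    · have h3 : (1 : ℝ) - q < 0 := by linarith
      exact le_of_lt (div_neg_of_pos_of_neg one_pos h3)
  rw [h1]
  exact mul_le_of_le_one_right (abs_nonneg y) h2

lemma Eint_posEq {q : ℝ} (hq : 1 < q) (t : ℝ) {y : ℝ} (hy : 0 < y) :
    Eint q t y = ((((y ^ (1 - q) : ℝ)) : ℂ) + ((((1 - q) * t : ℝ)) : ℂ) * Complex.I) ^
      (((1 / (1 - q) : ℝ)) : ℂ) := by
  have hσ : (1 : ℝ) - q < 0 := by linarith
  have hyσ : (0 : ℝ) < y ^ (1 - q) := Real.rpow_pos_of_pos hy _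
  have hmul1 : y ^ (1 - q) * y ^ (q - 1) = 1 := by
    rw [← Real.rpow_add hy]; norm_num
  have hmul : y ^ (1 - q) * ((1 - q) * t * (y ^ (q - 1))) = (1 - q) * t := by
    calc y ^ (1 - q) * ((1 - q) * t * (y ^ (q - 1)))
        = (1 - q) * t * (y ^ (1 - q) * y ^ (q - 1)) := by ring
      _ = (1 - q) * t := by rw [hmul1, mul_one]
  have hbase : (((y ^ (1 - q) : ℝ)) : ℂ) *
      (1 + ((((1 - q) * t * (y ^ (q - 1)) : ℝ)) : ℂ) * Complex.I)
      = (((y ^ (1 - q) : ℝ)) : ℂ) + ((((1 - q) * t : ℝ)) : ℂ) * Complex.I := by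
    calc (((y ^ (1 - q) : ℝ)) : ℂ) * (1 + ((((1 - q) * t * (y ^ (q - 1)) : ℝ)) : ℂ) * Complex.I)
        = (((y ^ (1 - q) : ℝ)) : ℂ) +
          (((y ^ (1 - q) * ((1 - q) * t * (y ^ (q - 1))) : ℝ)) : ℂ) * Complex.I := by
          push_cast; ring
      _ = _ := by rw [hmul]
  rw [Eint_eq q t y hq, ← hbase, ofReal_mul_cpow hyσ (base_ne_zero _)]
  congr 1
  rw [← Complex.ofReal_cpow hyσ.le]
  norm_cast
  rw [← Real.rpow_mul hy.le, mul_one_div_cancel hσ.ne, Real.rpow_one]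

lemma Eint_zero (q t : ℝ) : Eint q t 0 = 0 := by simp [Eint]

lemma Eint_nonpos {q : ℝ} (hq : 1 < q) (t : ℝ) {y : ℝ} (hy : y ≤ 0) :
    Eint q t y = - Eint q (t * Real.cos ((q - 1) * Real.pi)) (-y) := by
  rcases hy.lt_or_eq with hy | hy
  · have h1 : y ^ (q - 1) = (-y) ^ (q - 1) * Real.cos ((q - 1) * Real.pi) := by
      rw [Real.rpow_def_of_neg hy, Real.rpow_def_of_pos (neg_pos.mpr hy), Real.log_neg_eq_log]
    rw [Eint, Eint, h1]
    push_cast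
    ring
  · rw [hy]
    simp [Eint_zero]

lemma Eint_lip {q : ℝ} (hq : 1 < q) (t u v : ℝ) :
    ‖Eint q t u - Eint q t v‖ ≤ |u - v| := by
  have hσ : (1 : ℝ) - q < 0 := by linarith
  have key : ∀ t' u v : ℝ, 0 ≤ u → 0 ≤ v → ‖Eint q t' u - Eint q t' v‖ ≤ |u - v| := by
    intro t' u v hu hv
    rcases hu.eq_or_lt with hu | hu
    · rcases hv.eq_or_lt with hv | hv
      · rw [← hu, ← hv]; simp
      · rw [← hu, Eint_zero, zero_sub, norm_neg]
        calc ‖Eint q t' v‖ ≤ |v| := norm_Eint_le hq t' v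
          _ = |0 - v| := by rw [zero_sub, abs_neg]
    · rcases hv.eq_or_lt with hv | hv
      · rw [← hv, Eint_zero, sub_zero]
        calc ‖Eint q t' u‖ ≤ |u| := norm_Eint_le hq t' u
          _ = |u - 0| := by rw [sub_zero]
      · rw [Eint_posEq hq t' hu, Eint_posEq hq t' hv]
        exact core hσ (w := ((((1 - q) * t' : ℝ)) : ℂ) * Complex.I) (by simp) hu hv
  rcases le_or_gt 0 u with hu | hu <;> rcases le_or_gt 0 v with hv | hv
  · exact key t u v hu hv
  · calc ‖Eint q t u - Eint q t v‖ ≤ ‖Eint q t u‖ + ‖Eint q t v‖ := norm_sub_le _ _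
      _ ≤ |u| + |v| := add_le_add (norm_Eint_le hq t u) (norm_Eint_le hq t v)
      _ = |u - v| := by
          rw [_root_.abs_of_nonneg hu, abs_of_neg hv, abs_of_pos (by linarith : 0 < u - v)]; ring
  · calc ‖Eint q t u - Eint q t v‖ ≤ ‖Eint q t u‖ + ‖Eint q t v‖ := norm_sub_le _ _
      _ ≤ |u| + |v| := add_le_add (norm_Eint_le hq t u) (norm_Eint_le hq t v)
      _ = |u - v| := by
          rw [abs_of_neg hu, _root_.abs_of_nonneg hv, abs_of_neg (by linarith : u - v < 0)]; ring
  · rw [Eint_nonpos hq t hu.le, Eint_nonpos hq t hv.le, neg_sub_neg]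
    calc ‖Eint q (t * Real.cos ((q - 1) * Real.pi)) (-v) -
          Eint q (t * Real.cos ((q - 1) * Real.pi)) (-u)‖
        ≤ |-v - -u| := key _ _ _ (by linarith) (by linarith)
      _ = |u - v| := by rw [show -v - -u = u - v by ring]

end QProdAux

namespace QProdAux

lemma qFourier_eq (d : ℕ) (q : ℝ) (f : (Fin d → ℝ) → ℝ) (ξ : Fin d → ℝ) :
    qFourier d q f ξ = ∫ x, Eint q (x ⬝ᵥ ξ) (f x) := rfl

lemma integrable_Eint {d : ℕ} {q : ℝ} {f : (Fin d → ℝ) → ℝ} {ξ : Fin d → ℝ}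
    (h : qFourier d q f ξ ≠ 0) :
    Integrable (fun x => Eint q (x ⬝ᵥ ξ) (f x)) := by
  by_contra hI
  exact h (by rw [qFourier_eq]; exact integral_undef hI)

lemma integrable_density {d : ℕ} {q : ℝ} (hq : 1 < q) {f : (Fin d → ℝ) → ℝ}
    (h : qFourier d q f 0 ≠ 0) : Integrable f := by
  have h1 := integrable_Eint h
  have h2 : (fun x : Fin d → ℝ => Eint q (x ⬝ᵥ (0 : Fin d → ℝ)) (f x))
      = fun x => ((f x : ℝ) : ℂ) := by
    funext x
    simp [Eint, dotProduct_zero]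
  rw [h2] at h1
  simpa [RCLike.re_to_complex] using h1.re

lemma qFourier_sub_bound {d : ℕ} {q : ℝ} (hq : 1 < q) {f g : (Fin d → ℝ) → ℝ} (ξ : Fin d → ℝ)
    (hf : Integrable (fun x => Eint q (x ⬝ᵥ ξ) (f x)))
    (hg : Integrable (fun x => Eint q (x ⬝ᵥ ξ) (g x)))
    (hfg : Integrable (fun x => |f x - g x|)) :
    ‖qFourier d q f ξ - qFourier d q g ξ‖ ≤ ∫ x, |f x - g x| := by
  rw [qFourier_eq, qFourier_eq, ← integral_sub hf hg]
  calc ‖∫ x, (Eint q (x ⬝ᵥ ξ) (f x) - Eint q (x ⬝ᵥ ξ) (g x))‖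
      ≤ ∫ x, ‖Eint q (x ⬝ᵥ ξ) (f x) - Eint q (x ⬝ᵥ ξ) (g x)‖ :=
        norm_integral_le_integral_norm _
    _ ≤ ∫ x, |f x - g x| :=
        integral_mono ((hf.sub hg).norm) hfg (fun x => Eint_lip hq _ _ _)

lemma qProd_ofReal {q₁ a b : ℝ} (ha : 0 < a) (hb : 0 < b)
    (hbase : 0 < a ^ (1 - q₁) + b ^ (1 - q₁) - 1) :
    qProd q₁ (a : ℂ) (b : ℂ) =
      (((a ^ (1 - q₁) + b ^ (1 - q₁) - 1) ^ (1 / (1 - q₁)) : ℝ) : ℂ) := by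
  rw [qProd]
  have h1 : ((1 : ℂ) - (q₁ : ℂ)) = (((1 - q₁ : ℝ)) : ℂ) := by push_cast; ring
  have e3 : ((1 : ℂ) / (1 - (q₁ : ℂ))) = (((1 / (1 - q₁) : ℝ)) : ℂ) := by push_cast; ring
  rw [e3, h1, ← Complex.ofReal_cpow ha.le, ← Complex.ofReal_cpow hb.le]
  rw [show ((((a ^ (1 - q₁) : ℝ)) : ℂ) + (((b ^ (1 - q₁) : ℝ)) : ℂ) - 1)
      = (((a ^ (1 - q₁) + b ^ (1 - q₁) - 1 : ℝ)) : ℂ) by push_cast; ring]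
  rw [← Complex.ofReal_cpow hbase.le]

end QProdAux

/-- **Lemma 4.** Let `q > 1`, `q₁ > 1`, and `Z₁, Z₂, Z̃₁, Z̃₂` random vectors in `ℝ^d`
with densities, such that all four q-Fourier transforms are real and positive everywhere
and `F_q[Z₂]^(1-q₁) ≥ 1`, `F_q[Z̃₁]^(1-q₁) ≥ 1`, `F_q[Z̃₂]^(1-q₁) ≥ 1`.  Then
`‖F_q[Z₁] ⊗_{q₁} F_q[Z₂] - F_q[Z̃₁] ⊗_{q₁} F_q[Z̃₂]‖_∞ ≤ 2 d_TV(Z₁,Z̃₁) + 2 d_TV(Z₂,Z̃₂)`. -/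
theorem qProd_qFourier_dist_le_dTV
    {Ω : Type*} [MeasurableSpace Ω] (P : Measure Ω) [IsProbabilityMeasure P]
    (d : ℕ) (q q₁ : ℝ) (hq : 1 < q) (hq₁ : 1 < q₁)
    (Z₁ Z₂ Zt₁ Zt₂ : Ω → (Fin d → ℝ))
    (hZ₁ : Measurable Z₁) (hZ₂ : Measurable Z₂)
    (hZt₁ : Measurable Zt₁) (hZt₂ : Measurable Zt₂)
    (f₁ f₂ g₁ g₂ : (Fin d → ℝ) → ℝ)
    (hf₁ : HasDensity Z₁ P f₁) (hf₂ : HasDensity Z₂ P f₂)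
    (hg₁ : HasDensity Zt₁ P g₁) (hg₂ : HasDensity Zt₂ P g₂)
    (hreal₁ : ∀ ξ, (qFourier d q f₁ ξ).im = 0 ∧ 0 < (qFourier d q f₁ ξ).re)
    (hreal₂ : ∀ ξ, (qFourier d q f₂ ξ).im = 0 ∧ 0 < (qFourier d q f₂ ξ).re)
    (hrealt₁ : ∀ ξ, (qFourier d q g₁ ξ).im = 0 ∧ 0 < (qFourier d q g₁ ξ).re)
    (hrealt₂ : ∀ ξ, (qFourier d q g₂ ξ).im = 0 ∧ 0 < (qFourier d q g₂ ξ).re)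
    (hge₂ : ∀ ξ, 1 ≤ (qFourier d q f₂ ξ).re ^ (1 - q₁))
    (hget₁ : ∀ ξ, 1 ≤ (qFourier d q g₁ ξ).re ^ (1 - q₁))
    (hget₂ : ∀ ξ, 1 ≤ (qFourier d q g₂ ξ).re ^ (1 - q₁)) :
    ∀ ξ : Fin d → ℝ,
      ‖(qProd q₁ (qFourier d q f₁ ξ) (qFourier d q f₂ ξ) -
            qProd q₁ (qFourier d q g₁ ξ) (qFourier d q g₂ ξ))‖ ≤
        2 * dTV d f₁ g₁ + 2 * dTV d f₂ g₂ := by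
  intro ξ
  classical
  obtain ⟨hA_im, hA_pos⟩ := hreal₁ ξ
  obtain ⟨hB_im, hB_pos⟩ := hreal₂ ξ
  obtain ⟨hC_im, hC_pos⟩ := hrealt₁ ξ
  obtain ⟨hD_im, hD_pos⟩ := hrealt₂ ξ
  have hgb := hge₂ ξ
  have hgc := hget₁ ξ
  have hgee := hget₂ ξ
  set a := (qFourier d q f₁ ξ).re with ha_def
  set b := (qFourier d q f₂ ξ).re with hb_def
  set c := (qFourier d q g₁ ξ).re with hc_def
  set e := (qFourier d q g₂ ξ).re with he_def
  have hAeq : qFourier d q f₁ ξ = (a : ℂ) := Complex.ext (by simp [ha_def]) (by simp [hA_im])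
  have hBeq : qFourier d q f₂ ξ = (b : ℂ) := Complex.ext (by simp [hb_def]) (by simp [hB_im])
  have hCeq : qFourier d q g₁ ξ = (c : ℂ) := Complex.ext (by simp [hc_def]) (by simp [hC_im])
  have hDeq : qFourier d q g₂ ξ = (e : ℂ) := Complex.ext (by simp [he_def]) (by simp [hD_im])
  have hσ₁ : (1 : ℝ) - q₁ < 0 := by linarith
  have hne : ∀ (h : (Fin d → ℝ) → ℝ) (ξ' : Fin d → ℝ),
      0 < (qFourier d q h ξ').re → qFourier d q h ξ' ≠ 0 := by
    intro h ξ' hpos h0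
    rw [h0] at hpos
    simp at hpos
  have hif₁ : Integrable f₁ := QProdAux.integrable_density hq (hne f₁ 0 (hreal₁ 0).2)
  have hif₂ : Integrable f₂ := QProdAux.integrable_density hq (hne f₂ 0 (hreal₂ 0).2)
  have hig₁ : Integrable g₁ := QProdAux.integrable_density hq (hne g₁ 0 (hrealt₁ 0).2)
  have hig₂ : Integrable g₂ := QProdAux.integrable_density hq (hne g₂ 0 (hrealt₂ 0).2)
  have habs1 : Integrable (fun x => |f₁ x - g₁ x|) := (hif₁.sub hig₁).abs
  have habs2 : Integrable (fun x => |f₂ x - g₂ x|) := (hif₂.sub hig₂).abs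
  have hEf₁ := QProdAux.integrable_Eint (hne f₁ ξ hA_pos)
  have hEf₂ := QProdAux.integrable_Eint (hne f₂ ξ hB_pos)
  have hEg₁ := QProdAux.integrable_Eint (hne g₁ ξ hC_pos)
  have hEg₂ := QProdAux.integrable_Eint (hne g₂ ξ hD_pos)
  have hb₁ := QProdAux.qFourier_sub_bound hq ξ hEf₁ hEg₁ habs1
  have hb₂ := QProdAux.qFourier_sub_bound hq ξ hEf₂ hEg₂ habs2
  have hd₁ : |a - c| ≤ ∫ x, |f₁ x - g₁ x| := by
    rw [hAeq, hCeq, ← Complex.ofReal_sub, Complex.norm_real, Real.norm_eq_abs] at hb₁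
    exact hb₁
  have hd₂ : |b - e| ≤ ∫ x, |f₂ x - g₂ x| := by
    rw [hBeq, hDeq, ← Complex.ofReal_sub, Complex.norm_real, Real.norm_eq_abs] at hb₂
    exact hb₂
  have hba : 0 < a ^ (1 - q₁) + b ^ (1 - q₁) - 1 := by
    linarith [Real.rpow_pos_of_pos hA_pos (1 - q₁)]
  have hbm : 0 < c ^ (1 - q₁) + b ^ (1 - q₁) - 1 := by
    linarith [Real.rpow_pos_of_pos hB_pos (1 - q₁)]
  have hbce : 0 < c ^ (1 - q₁) + e ^ (1 - q₁) - 1 := by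
    linarith [Real.rpow_pos_of_pos hD_pos (1 - q₁)]
  have step1 : |(a ^ (1 - q₁) + b ^ (1 - q₁) - 1) ^ (1 / (1 - q₁)) -
      (c ^ (1 - q₁) + b ^ (1 - q₁) - 1) ^ (1 / (1 - q₁))| ≤ |a - c| := by
    have hk : 0 ≤ b ^ (1 - q₁) - 1 := by linarith
    have h := QProdAux.realLip hσ₁ hk hA_pos hC_pos
    rw [show a ^ (1 - q₁) + (b ^ (1 - q₁) - 1) = a ^ (1 - q₁) + b ^ (1 - q₁) - 1 by ring,
      show c ^ (1 - q₁) + (b ^ (1 - q₁) - 1) = c ^ (1 - q₁) + b ^ (1 - q₁) - 1 by ring] at h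
    exact h
  have step2 : |(c ^ (1 - q₁) + b ^ (1 - q₁) - 1) ^ (1 / (1 - q₁)) -
      (c ^ (1 - q₁) + e ^ (1 - q₁) - 1) ^ (1 / (1 - q₁))| ≤ |b - e| := by
    have hk : 0 ≤ c ^ (1 - q₁) - 1 := by linarith
    have h := QProdAux.realLip hσ₁ hk hB_pos hD_pos
    rw [show b ^ (1 - q₁) + (c ^ (1 - q₁) - 1) = c ^ (1 - q₁) + b ^ (1 - q₁) - 1 by ring,
      show e ^ (1 - q₁) + (c ^ (1 - q₁) - 1) = c ^ (1 - q₁) + e ^ (1 - q₁) - 1 by ring] at h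
    exact h
  have hdtv1 : 2 * dTV d f₁ g₁ = ∫ x, |f₁ x - g₁ x| := by rw [dTV]; ring
  have hdtv2 : 2 * dTV d f₂ g₂ = ∫ x, |f₂ x - g₂ x| := by rw [dTV]; ring
  rw [hAeq, hBeq, hCeq, hDeq, QProdAux.qProd_ofReal hA_pos hB_pos hba,
    QProdAux.qProd_ofReal hC_pos hD_pos hbce, ← Complex.ofReal_sub, Complex.norm_real, Real.norm_eq_abs,
    hdtv1, hdtv2]
  calc |(a ^ (1 - q₁) + b ^ (1 - q₁) - 1) ^ (1 / (1 - q₁)) -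
        (c ^ (1 - q₁) + e ^ (1 - q₁) - 1) ^ (1 / (1 - q₁))|
      ≤ |(a ^ (1 - q₁) + b ^ (1 - q₁) - 1) ^ (1 / (1 - q₁)) -
          (c ^ (1 - q₁) + b ^ (1 - q₁) - 1) ^ (1 / (1 - q₁))| +
        |(c ^ (1 - q₁) + b ^ (1 - q₁) - 1) ^ (1 / (1 - q₁)) -
          (c ^ (1 - q₁) + e ^ (1 - q₁) - 1) ^ (1 / (1 - q₁))| := abs_sub_le _ _ _
    _ ≤ |a - c| + |b - e| := add_le_add step1 step2
    _ ≤ (∫ x, |f₁ x - g₁ x|) + ∫ x, |f₂ x - g₂ x| := add_le_add hd₁ hd₂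
end
end

section
/- Let m > 2, let Λ be a symmetric positive definite d×d matrix, and let Z be a random vector in ℝ^d with density f_Z(z) = Γ((m+d)/2) / ( Γ(m/2) · det(πΛ)^{1/2} ) · (1 + zᵀΛ⁻¹z)^{−(m+d)/2} (the q-Gaussian density with q = (m+d+2)/(m+d) > 1). Then Y = Z / √(1 + ZᵀΛ⁻¹Z) takes values in { y : yᵀΛ⁻¹y < 1 } and has density g(y) = Γ((m+d)/2) / ( Γ(m/2) · det(πΛ)^{1/2} ) · (1 − yᵀΛ⁻¹y)_+^{(m−2)/2}, which is the q'-Gaussian density with q' = (m−4)/(m−2) < 1 and parameter matrix Σ = Λ. -/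
open MeasureTheory ProbabilityTheory Filter Matrix
open scoped Topology

noncomputable section

namespace QGaussAuxZ

variable {d : ℕ}

def dotCLM (d : ℕ) (v : Fin d → ℝ) : (Fin d → ℝ) →L[ℝ] ℝ :=
  LinearMap.toContinuousLinearMap
    { toFun := fun z => v ⬝ᵥ z
      map_add' := fun a b => dotProduct_add v a b
      map_smul' := fun c a => by simp [dotProduct_smul] }

@[simp] lemma dotCLM_apply (v z : Fin d → ℝ) : dotCLM d v z = v ⬝ᵥ z := rfl

def quadB (d : ℕ) (M : Matrix (Fin d) (Fin d) ℝ) :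
    (Fin d → ℝ) →L[ℝ] (Fin d → ℝ) →L[ℝ] ℝ :=
  LinearMap.toContinuousLinearMap
    { toFun := fun x => dotCLM d (Mᵀ *ᵥ x)
      map_add' := fun a b => by ext z; simp [Matrix.mulVec_add, add_dotProduct]
      map_smul' := fun c a => by ext z; simp [Matrix.mulVec_smul, smul_dotProduct] }

@[simp] lemma quadB_apply (M : Matrix (Fin d) (Fin d) ℝ) (x z : Fin d → ℝ) :
    quadB d M x z = (Mᵀ *ᵥ x) ⬝ᵥ z := rfl

lemma hasFDerivAt_quad (M : Matrix (Fin d) (Fin d) ℝ) (hM : Mᵀ = M) (y : Fin d → ℝ) :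
    HasFDerivAt (fun z => z ⬝ᵥ M *ᵥ z) (dotCLM d ((2:ℝ) • (M *ᵥ y))) y := by
  have hb := (quadB d M).isBoundedBilinearMap.hasFDerivAt (y, y)
  have hdiag : HasFDerivAt (fun z : Fin d → ℝ => (z, z))
      ((ContinuousLinearMap.id ℝ _).prod (ContinuousLinearMap.id ℝ _)) y :=
    ((ContinuousLinearMap.id ℝ (Fin d → ℝ)).prod (ContinuousLinearMap.id ℝ _)).hasFDerivAt
  have h := HasFDerivAt.comp (f := fun z : Fin d → ℝ => (z, z)) y hb hdiag
  have key : ∀ z w : Fin d → ℝ, (Mᵀ *ᵥ z) ⬝ᵥ w = z ⬝ᵥ M *ᵥ w := by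
    intro z w
    rw [Matrix.mulVec_transpose, ← Matrix.dotProduct_mulVec]
  convert h using 2 with z
  case e'_4 | e'_5 | e'_6 | e'_8 | e'_9 => rfl
  · simp only [Function.comp_apply, quadB_apply, key]
  · ext z
    simp only [ContinuousLinearMap.coe_comp', Function.comp_apply,
      ContinuousLinearMap.prod_apply, ContinuousLinearMap.coe_id', id_eq,
      IsBoundedBilinearMap.deriv_apply, quadB_apply, dotCLM_apply]
    have key2 : ∀ w, y ⬝ᵥ M *ᵥ w = M *ᵥ y ⬝ᵥ w := fun w => by rw [← key, hM]
    rw [key, key, key2, dotProduct_comm z, smul_dotProduct, two_smul]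

lemma det_aux (c : ℝ) (hc : c ≠ 0) (y v : Fin d → ℝ) :
    (c • ContinuousLinearMap.id ℝ (Fin d → ℝ) + (dotCLM d v).smulRight y).det
      = c ^ d * (1 + c⁻¹ * (v ⬝ᵥ y)) := by
  have hmat : LinearMap.toMatrix'
      ((c • ContinuousLinearMap.id ℝ (Fin d → ℝ) + (dotCLM d v).smulRight y)
        : (Fin d → ℝ) →ₗ[ℝ] (Fin d → ℝ))
      = c • (1 : Matrix (Fin d) (Fin d) ℝ) + Matrix.replicateCol Unit y * Matrix.replicateRow Unit v := by
    ext i j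
    simp [LinearMap.toMatrix'_apply, Matrix.one_apply, Matrix.mul_apply,
      dotProduct, mul_ite, mul_one, mul_zero, Finset.sum_ite_eq', Pi.single_apply]
    ring
  have h2 : (c • (1 : Matrix (Fin d) (Fin d) ℝ) + Matrix.replicateCol Unit y * Matrix.replicateRow Unit v)
      = c • ((1 : Matrix (Fin d) (Fin d) ℝ) + Matrix.replicateCol Unit (c⁻¹ • y) * Matrix.replicateRow Unit v) := by
    rw [smul_add]
    congr 1
    rw [Matrix.replicateCol_smul, Matrix.smul_mul, smul_smul, mul_inv_cancel₀ hc, one_smul]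
  have hdm := LinearMap.det_toMatrix'
    ((c • ContinuousLinearMap.id ℝ (Fin d → ℝ) + (dotCLM d v).smulRight y)
      : (Fin d → ℝ) →ₗ[ℝ] (Fin d → ℝ))
  rw [ContinuousLinearMap.det, ContinuousLinearMap.coe_add, ContinuousLinearMap.coe_smul,
    ← hdm, hmat, h2, Matrix.det_smul, Matrix.det_one_add_replicateCol_mul_replicateRow, dotProduct_smul]
  simp [Fintype.card_fin]

lemma quad_smul (M : Matrix (Fin d) (Fin d) ℝ) (c : ℝ) (y : Fin d → ℝ) :
    (c • y) ⬝ᵥ M *ᵥ (c • y) = c ^ 2 * (y ⬝ᵥ M *ᵥ y) := by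
  rw [smul_dotProduct, Matrix.mulVec_smul, dotProduct_smul, smul_eq_mul, smul_eq_mul]
  ring

end QGaussAuxZ

open QGaussAuxZ

/-- If `Z` has the q-Gaussian density `Γ((m+d)/2)/(Γ(m/2)√det(πΛ)) (1 + zᵀΛ⁻¹z)^(-(m+d)/2)`
(`q = (m+d+2)/(m+d) > 1`), then `Y = Z/√(1 + ZᵀΛ⁻¹Z)` takes values in the ellipsoid
`{y : yᵀΛ⁻¹y < 1}` and has density `Γ((m+d)/2)/(Γ(m/2)√det(πΛ)) (1 - yᵀΛ⁻¹y)₊^((m-2)/2)`,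
the q'-Gaussian density with `q' = (m-4)/(m-2) < 1` and parameter matrix `Σ = Λ`. -/
theorem qGaussian_gt_to_lt_transform
    {Ω : Type*} [MeasurableSpace Ω] (P : Measure Ω) [IsProbabilityMeasure P]
    (d : ℕ) (hd : 0 < d) (m : ℝ) (hm : 2 < m)
    (L : Matrix (Fin d) (Fin d) ℝ) (hL : L.PosDef)
    (Z : Ω → (Fin d → ℝ)) (hZmeas : Measurable Z)
    (hZ : HasDensity Z P
      (fun z =>
        Real.Gamma ((m + d) / 2) / (Real.Gamma (m / 2) * Real.sqrt (Real.pi • L).det) *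
          (1 + z ⬝ᵥ (L⁻¹ *ᵥ z)) ^ (-(m + (d : ℝ)) / 2)))
    (Y : Ω → (Fin d → ℝ))
    (hY : ∀ ω, Y ω = (Real.sqrt (1 + Z ω ⬝ᵥ (L⁻¹ *ᵥ Z ω)))⁻¹ • Z ω) :
    (∀ ω, Y ω ⬝ᵥ (L⁻¹ *ᵥ Y ω) < 1) ∧
    HasDensity Y P
      (fun y =>
        Real.Gamma ((m + d) / 2) / (Real.Gamma (m / 2) * Real.sqrt (Real.pi • L).det) *
          (max (1 - y ⬝ᵥ (L⁻¹ *ᵥ y)) 0) ^ ((m - 2) / 2)) ∧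
    (∀ y,
      Real.Gamma ((m + d) / 2) / (Real.Gamma (m / 2) * Real.sqrt (Real.pi • L).det) *
          (max (1 - y ⬝ᵥ (L⁻¹ *ᵥ y)) 0) ^ ((m - 2) / 2) =
        qGaussLT d ((m - 4) / (m - 2)) L y) ∧
    (m - 4) / (m - 2) < 1 := by
  classical
  have hm2 : m - 2 ≠ 0 := by linarith
  -- basic facts about the quadratic form
  have hMsym : (L⁻¹)ᵀ = L⁻¹ := by
    have h := hL.inv.isHermitian
    rwa [Matrix.IsHermitian, Matrix.conjTranspose_eq_transpose_of_trivial] at h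
  have hQ0 : ∀ z, 0 ≤ z ⬝ᵥ (L⁻¹ *ᵥ z) := by
    intro z
    have h := hL.inv.posSemidef.dotProduct_mulVec_nonneg z
    simpa using h
  have h1Q : ∀ z : Fin d → ℝ, (0:ℝ) < 1 + z ⬝ᵥ (L⁻¹ *ᵥ z) := fun z => by linarith [hQ0 z]
  have hq : ∀ y, HasFDerivAt (fun z => z ⬝ᵥ (L⁻¹ *ᵥ z)) (dotCLM d ((2:ℝ) • (L⁻¹ *ᵥ y))) y :=
    fun y => hasFDerivAt_quad _ hMsym y
  have hQcont : Continuous (fun z : Fin d → ℝ => z ⬝ᵥ (L⁻¹ *ᵥ z)) :=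
    continuous_iff_continuousAt.2 fun y => (hq y).continuousAt
  -- the transformation and its inverse
  set T : (Fin d → ℝ) → (Fin d → ℝ) :=
    fun z => (Real.sqrt (1 + z ⬝ᵥ (L⁻¹ *ᵥ z)))⁻¹ • z with hTdef
  set S : (Fin d → ℝ) → (Fin d → ℝ) :=
    fun y => (Real.sqrt (1 - y ⬝ᵥ (L⁻¹ *ᵥ y)))⁻¹ • y with hSdef
  have hQT : ∀ z : Fin d → ℝ,
      (T z) ⬝ᵥ (L⁻¹ *ᵥ (T z)) = (z ⬝ᵥ (L⁻¹ *ᵥ z)) / (1 + z ⬝ᵥ (L⁻¹ *ᵥ z)) := by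
    intro z
    rw [hTdef]
    simp only []
    rw [quad_smul, inv_pow, Real.sq_sqrt (h1Q z).le, inv_mul_eq_div]
  have hQTlt : ∀ z : Fin d → ℝ, (T z) ⬝ᵥ (L⁻¹ *ᵥ (T z)) < 1 := by
    intro z
    rw [hQT z]
    exact (div_lt_one (h1Q z)).2 (by linarith [hQ0 z])
  have hQS : ∀ y : Fin d → ℝ, y ⬝ᵥ (L⁻¹ *ᵥ y) < 1 →
      (S y) ⬝ᵥ (L⁻¹ *ᵥ (S y)) = (y ⬝ᵥ (L⁻¹ *ᵥ y)) / (1 - y ⬝ᵥ (L⁻¹ *ᵥ y)) := by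
    intro y hy
    have hu : (0:ℝ) < 1 - y ⬝ᵥ (L⁻¹ *ᵥ y) := by linarith
    rw [hSdef]
    simp only []
    rw [quad_smul, inv_pow, Real.sq_sqrt hu.le, inv_mul_eq_div]
  have hTS : ∀ y : Fin d → ℝ, y ⬝ᵥ (L⁻¹ *ᵥ y) < 1 → T (S y) = y := by
    intro y hy
    have hu : (0:ℝ) < 1 - y ⬝ᵥ (L⁻¹ *ᵥ y) := by linarith
    have h1 : 1 + (S y) ⬝ᵥ (L⁻¹ *ᵥ (S y)) = (1 - y ⬝ᵥ (L⁻¹ *ᵥ y))⁻¹ := by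
      rw [hQS y hy]
      set a := y ⬝ᵥ (L⁻¹ *ᵥ y) with ha
      field_simp
      ring
    rw [hTdef]
    simp only []
    rw [h1, Real.sqrt_inv, inv_inv, hSdef]
    simp only []
    rw [smul_smul, mul_inv_cancel₀ (ne_of_gt (Real.sqrt_pos.2 hu)), one_smul]
  have hST : ∀ z : Fin d → ℝ, S (T z) = z := by
    intro z
    have h1 : 1 - (T z) ⬝ᵥ (L⁻¹ *ᵥ (T z)) = (1 + z ⬝ᵥ (L⁻¹ *ᵥ z))⁻¹ := by
      rw [hQT z]
      set a := z ⬝ᵥ (L⁻¹ *ᵥ z) with ha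
      have h1a : (0:ℝ) < 1 + a := h1Q z
      field_simp
      ring
    rw [hSdef]
    simp only []
    rw [h1, Real.sqrt_inv, inv_inv, hTdef]
    simp only []
    rw [smul_smul, mul_inv_cancel₀ (ne_of_gt (Real.sqrt_pos.2 (h1Q z))), one_smul]
  have hYT : ∀ ω, Y ω = T (Z ω) := fun ω => hY ω
  refine ⟨?_, ?_, ?_, ?_⟩
  · intro ω
    rw [hYT ω]
    exact hQTlt (Z ω)
  · -- the density of Y
    set CC : ℝ := Real.Gamma ((m + d) / 2) / (Real.Gamma (m / 2) * Real.sqrt (Real.pi • L).det)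
      with hCC
    have hTcont : Continuous T := by
      rw [hTdef]
      exact ((Real.continuous_sqrt.comp (continuous_const.add hQcont)).inv₀
        (fun z => ne_of_gt (Real.sqrt_pos.2 (h1Q z)))).smul continuous_id
    have hTmeas : Measurable T := hTcont.measurable
    have hEopen : IsOpen {y : Fin d → ℝ | y ⬝ᵥ (L⁻¹ *ᵥ y) < 1} :=
      isOpen_lt hQcont continuous_const
    set E : Set (Fin d → ℝ) := {y | y ⬝ᵥ (L⁻¹ *ᵥ y) < 1} with hEdef
    -- the derivative of S
    set f' : (Fin d → ℝ) → ((Fin d → ℝ) →L[ℝ] (Fin d → ℝ)) := fun y =>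
      (Real.sqrt (1 - y ⬝ᵥ (L⁻¹ *ᵥ y)))⁻¹ • ContinuousLinearMap.id ℝ (Fin d → ℝ) +
        (dotCLM d ((((1 - y ⬝ᵥ (L⁻¹ *ᵥ y)) * Real.sqrt (1 - y ⬝ᵥ (L⁻¹ *ᵥ y)))⁻¹) •
          (L⁻¹ *ᵥ y))).smulRight y with hf'def
    have hSder : ∀ y : Fin d → ℝ, y ⬝ᵥ (L⁻¹ *ᵥ y) < 1 → HasFDerivAt S (f' y) y := by
      intro y hy
      have hu : (0:ℝ) < 1 - y ⬝ᵥ (L⁻¹ *ᵥ y) := by linarith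
      have hsu : Real.sqrt (1 - y ⬝ᵥ (L⁻¹ *ᵥ y)) ≠ 0 := ne_of_gt (Real.sqrt_pos.2 hu)
      have h1 : HasDerivAt (fun t : ℝ => 1 - t) (-1) (y ⬝ᵥ (L⁻¹ *ᵥ y)) := by
        simpa using (hasDerivAt_id (y ⬝ᵥ (L⁻¹ *ᵥ y))).const_sub 1
      have h2 : HasDerivAt Real.sqrt (1 / (2 * Real.sqrt (1 - y ⬝ᵥ (L⁻¹ *ᵥ y))))
          (1 - y ⬝ᵥ (L⁻¹ *ᵥ y)) := Real.hasDerivAt_sqrt hu.ne'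
      have h3 := h2.comp (y ⬝ᵥ (L⁻¹ *ᵥ y)) h1
      have h4 := h3.inv (by simpa using hsu)
      have h5 := h4.comp_hasFDerivAt y (hq y)
      have hc : HasFDerivAt (fun z : Fin d → ℝ => (Real.sqrt (1 - z ⬝ᵥ (L⁻¹ *ᵥ z)))⁻¹)
          (dotCLM d ((((1 - y ⬝ᵥ (L⁻¹ *ᵥ y)) * Real.sqrt (1 - y ⬝ᵥ (L⁻¹ *ᵥ y)))⁻¹) •
            (L⁻¹ *ᵥ y))) y := by
        have heq : dotCLM d ((((1 - y ⬝ᵥ (L⁻¹ *ᵥ y)) * Real.sqrt (1 - y ⬝ᵥ (L⁻¹ *ᵥ y)))⁻¹) •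
            (L⁻¹ *ᵥ y))
            = (-(1 / (2 * Real.sqrt (1 - y ⬝ᵥ (L⁻¹ *ᵥ y))) * -1) /
                ((Real.sqrt ∘ fun t => 1 - t) (y ⬝ᵥ (L⁻¹ *ᵥ y))) ^ 2) •
              dotCLM d ((2:ℝ) • (L⁻¹ *ᵥ y)) := by
          ext z
          simp only [dotCLM_apply, ContinuousLinearMap.coe_smul', Pi.smul_apply,
            Function.comp_apply, smul_dotProduct, smul_eq_mul]
          rw [Real.sq_sqrt hu.le]
          set a := y ⬝ᵥ (L⁻¹ *ᵥ y) with ha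
          field_simp
        rw [heq]
        exact h5
      have hfinal := hc.smul (hasFDerivAt_id y)
      exact hfinal
    -- basic identities
    have h1S : ∀ y : Fin d → ℝ, y ⬝ᵥ (L⁻¹ *ᵥ y) < 1 →
        1 + (S y) ⬝ᵥ (L⁻¹ *ᵥ (S y)) = (1 - y ⬝ᵥ (L⁻¹ *ᵥ y))⁻¹ := by
      intro y hy
      have hu : (0:ℝ) < 1 - y ⬝ᵥ (L⁻¹ *ᵥ y) := by linarith
      rw [hQS y hy]
      set a := y ⬝ᵥ (L⁻¹ *ᵥ y) with ha
      field_simp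
      ring
    have hdet : ∀ y : Fin d → ℝ, y ⬝ᵥ (L⁻¹ *ᵥ y) < 1 →
        (f' y).det = ((Real.sqrt (1 - y ⬝ᵥ (L⁻¹ *ᵥ y)))⁻¹) ^ d *
          (1 - y ⬝ᵥ (L⁻¹ *ᵥ y))⁻¹ := by
      intro y hy
      have hu : (0:ℝ) < 1 - y ⬝ᵥ (L⁻¹ *ᵥ y) := by linarith
      have hsu : Real.sqrt (1 - y ⬝ᵥ (L⁻¹ *ᵥ y)) ≠ 0 := ne_of_gt (Real.sqrt_pos.2 hu)
      rw [hf'def]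
      simp only []
      rw [det_aux _ (inv_ne_zero hsu), inv_inv]
      congr 1
      rw [smul_dotProduct, smul_eq_mul,
        show (L⁻¹ *ᵥ y) ⬝ᵥ y = y ⬝ᵥ (L⁻¹ *ᵥ y) from dotProduct_comm _ _]
      set a := y ⬝ᵥ (L⁻¹ *ᵥ y) with ha
      rw [mul_inv]
      field_simp
      ring
    -- preimage identity
    have hpre : ∀ A : Set (Fin d → ℝ), T ⁻¹' A = S '' (A ∩ E) := by
      intro A
      ext z
      constructor
      · intro hz
        exact ⟨T z, ⟨hz, hQTlt z⟩, hST z⟩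
      · rintro ⟨y, ⟨hyA, hyE⟩, rfl⟩
        show T (S y) ∈ A
        rw [hTS y hyE]
        exact hyA
    -- the measure computation
    unfold HasDensity at hZ ⊢
    have hmap : Measure.map Y P = Measure.map T (Measure.map Z P) := by
      rw [Measure.map_map hTmeas hZmeas]
      congr 1
      funext ω
      exact hYT ω
    rw [hmap, hZ]
    ext A hA
    rw [Measure.map_apply hTmeas hA, withDensity_apply _ (hTmeas hA), withDensity_apply _ hA,
      hpre A]
    rw [lintegral_image_eq_lintegral_abs_det_fderiv_mul volume
      (hA.inter hEopen.measurableSet)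
      (fun y hy => (hSder y hy.2).hasFDerivWithinAt)
      (fun a ha b hb hab => by rw [← hTS a ha.2, ← hTS b hb.2, hab]) _]
    -- pointwise identification of the integrand on A ∩ E
    have hkey : ∀ y ∈ A ∩ E,
        ENNReal.ofReal |(f' y).det| *
          ENNReal.ofReal (CC * (1 + (S y) ⬝ᵥ (L⁻¹ *ᵥ (S y))) ^ (-(m + (d:ℝ)) / 2))
          = ENNReal.ofReal (CC * max (1 - y ⬝ᵥ (L⁻¹ *ᵥ y)) 0 ^ ((m - 2) / 2)) := by
      intro y hy
      have hyE : y ⬝ᵥ (L⁻¹ *ᵥ y) < 1 := hy.2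
      have hu : (0:ℝ) < 1 - y ⬝ᵥ (L⁻¹ *ᵥ y) := by linarith
      have hsu : (0:ℝ) < Real.sqrt (1 - y ⬝ᵥ (L⁻¹ *ᵥ y)) := Real.sqrt_pos.2 hu
      rw [← ENNReal.ofReal_mul (abs_nonneg _)]
      congr 1
      rw [hdet y hyE, h1S y hyE, abs_of_pos (by positivity)]
      rw [max_eq_left hu.le]
      set u := 1 - y ⬝ᵥ (L⁻¹ *ᵥ y) with hudef
      have e3 : (u⁻¹) ^ (-(m + (d:ℝ)) / 2) = u ^ ((m + (d:ℝ)) / 2) := by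
        rw [Real.inv_rpow hu.le, ← Real.rpow_neg hu.le, neg_div, neg_neg]
      have e4 : ((Real.sqrt u)⁻¹) ^ d = u ^ (-((d:ℝ) / 2)) := by
        rw [inv_pow, ← Real.rpow_natCast (Real.sqrt u) d, Real.sqrt_eq_rpow,
          ← Real.rpow_mul hu.le, ← Real.rpow_neg hu.le]
        congr 1
        push_cast
        ring
      have e5 : u⁻¹ = u ^ (-1 : ℝ) := (Real.rpow_neg_one u).symm
      rw [e3, e4, e5]
      calc u ^ (-((d:ℝ) / 2)) * u ^ (-1:ℝ) * (CC * u ^ ((m + (d:ℝ)) / 2))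
            = CC * (u ^ (-((d:ℝ) / 2)) * u ^ (-1:ℝ) * u ^ ((m + (d:ℝ)) / 2)) := by ring
        _ = CC * u ^ (-((d:ℝ) / 2) + (-1:ℝ) + (m + (d:ℝ)) / 2) := by
            rw [← Real.rpow_add hu, ← Real.rpow_add hu]
        _ = CC * u ^ ((m - 2) / 2) := by
            rw [show -((d:ℝ) / 2) + (-1:ℝ) + (m + (d:ℝ)) / 2 = (m - 2) / 2 by ring]
    rw [setLIntegral_congr_fun (hA.inter hEopen.measurableSet) hkey]
    -- extend from A ∩ E to A
    have hzero : ∫⁻ y in A \ E,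
        ENNReal.ofReal (CC * max (1 - y ⬝ᵥ (L⁻¹ *ᵥ y)) 0 ^ ((m - 2) / 2)) = 0 := by
      rw [setLIntegral_congr_fun (hA.diff hEopen.measurableSet)
        (fun y hy => ?_), lintegral_zero]
      have h1 : ¬ (y ⬝ᵥ (L⁻¹ *ᵥ y) < 1) := hy.2
      rw [max_eq_right (by linarith [not_lt.1 h1]),
        Real.zero_rpow (by positivity : ((m:ℝ) - 2) / 2 ≠ 0), mul_zero, ENNReal.ofReal_zero]
    have hAsplit := lintegral_union (μ := volume)
      (f := fun y => ENNReal.ofReal (CC * max (1 - y ⬝ᵥ (L⁻¹ *ᵥ y)) 0 ^ ((m - 2) / 2)))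
      (hA.diff hEopen.measurableSet) (Set.disjoint_sdiff_inter (s := A) (t := E)).symm
    rw [Set.inter_union_diff] at hAsplit
    rw [hAsplit, hzero, add_zero]
  · -- identification with the q-Gaussian density for q' = (m-4)/(m-2)
    intro y
    have e1 : (1 : ℝ) - (m - 4) / (m - 2) = 2 / (m - 2) := by field_simp; ring
    have e2 : (2 : ℝ) - (m - 4) / (m - 2) = m / (m - 2) := by field_simp; ring
    have hA : ((2:ℝ) - (m - 4) / (m - 2)) / (1 - (m - 4) / (m - 2)) = m / 2 := by
      rw [e1, e2, div_div_div_cancel_right₀ hm2]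
    have hB : 1 / (1 - (m - 4) / (m - 2)) = (m - 2) / 2 := by
      rw [e1, one_div_div]
    rw [qGaussLT, hA, hB, show (m / 2 + (d:ℝ) / 2) = (m + d) / 2 by ring]
  · rw [div_lt_one (by linarith : (0:ℝ) < m - 2)]
    linarith
end
end
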